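/- Let p ≥ 1 be an integer, let N be a p-rooted almost-binary phylogenetic network on X, and let {Z_1, ..., Z_d} be the maximal zig-zag trail decomposition of N. For any S ⊆ E(N), the induced subgraph N[S] is a support network of N if and only if S ∩ E(Z_i) is an A-admissible subset of E(Z_i) for every i ∈ [1, d]. -/

import Mathlib

open Finset

variable {V : Type} [DecidableEq V] [Fintype V]

/-- The vertex set of the digraph given by the edge set `E`. -/
def verts (E : Finset (V × V)) : Finset V :=
  E.image Prod.fst ∪ E.image Prod.snd

/-- In-degree of `v` in the digraph with edge set `E`. -/
def indeg (E : Finset (V × V)) (v : V) : ℕ :=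
  (E.filter fun e => e.2 = v).card

/-- Out-degree of `v` in the digraph with edge set `E`. -/
def outdeg (E : Finset (V × V)) (v : V) : ℕ :=
  (E.filter fun e => e.1 = v).card

/-- `E` is (the edge set of) a `p`-rooted almost-binary phylogenetic network on `X`:
a finite simple DAG with exactly `p` in-degree-0 vertices, each of out-degree 1 or 2 (the roots),
whose set of in-degree-1, out-degree-0 vertices is `X` (the leaves), and all of whose other
vertices have in-degree and out-degree in `{1, 2}`. -/
structure IsPhyloNet (E : Finset (V × V)) (p : ℕ) (X : Finset V) : Prop where
  acyclic : ∀ v : V, ¬ Relation.TransGen (fun a b => (a, b) ∈ E) v v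
  roots_card : ((verts E).filter fun v => indeg E v = 0).card = p
  root_outdeg : ∀ v ∈ verts E, indeg E v = 0 → outdeg E v = 1 ∨ outdeg E v = 2
  leaves_eq : (verts E).filter (fun v => indeg E v = 1 ∧ outdeg E v = 0) = X
  internal_deg : ∀ v ∈ verts E, indeg E v ≠ 0 → v ∉ X →
    (indeg E v = 1 ∨ indeg E v = 2) ∧ (outdeg E v = 1 ∨ outdeg E v = 2)

/-- Two directed edges share a tail or share a head. -/
def Shares (e f : V × V) : Prop := e.1 = f.1 ∨ e.2 = f.2

/-- `S` is (the edge set of) a zig-zag trail of the digraph `E`: a subgraph with `m ≥ 1`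
edges which can be ordered so that consecutive edges share a head or share a tail. -/
def IsZigzagTrail (E S : Finset (V × V)) : Prop :=
  S ⊆ E ∧ ∃ l : List (V × V), l ≠ [] ∧ l.Nodup ∧ l.toFinset = S ∧ l.Chain' Shares

/-- A maximal zig-zag trail: one that is not a proper subgraph of another zig-zag trail. -/
def IsMaximalZigzagTrail (E S : Finset (V × V)) : Prop :=
  IsZigzagTrail E S ∧ ∀ S', IsZigzagTrail E S' → ¬ S ⊂ S'

/-- The `i`-th edge (0-indexed) of a zig-zag sequence on vertices `f 0, f 1, ...`;
when `down = true` the first edge descends (`f 0 > f 1`), and directions alternate. -/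
def zigEdge (f : ℕ → V) (down : Bool) (i : ℕ) : V × V :=
  if decide (i % 2 = 0) = down then (f i, f (i + 1)) else (f (i + 1), f i)

/-- `S` consists of the `m` distinct edges of the zig-zag sequence on `f 0, ..., f m`. -/
def IsZigzagShape (S : Finset (V × V)) (m : ℕ) (f : ℕ → V) (down : Bool) : Prop :=
  S = (Finset.range m).image (zigEdge f down) ∧
  ∀ i < m, ∀ j < m, zigEdge f down i = zigEdge f down j → i = j

/-- A crown: an even number `m` of edges written cyclically as `v₀ > v₁ < ⋯ < v_m = v₀`. -/
def IsCrown (S : Finset (V × V)) : Prop :=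
  ∃ m f, 1 ≤ m ∧ m % 2 = 0 ∧ f m = f 0 ∧ IsZigzagShape S m f true

/-- An M-fence: a non-crown with an even number `m` of edges,
of the form `v₀ < v₁ > ⋯ > v_m ≠ v₀`. -/
def IsMFence (S : Finset (V × V)) : Prop :=
  ¬ IsCrown S ∧ ∃ m f, 1 ≤ m ∧ m % 2 = 0 ∧ f m ≠ f 0 ∧ IsZigzagShape S m f false

/-- A W-fence: a non-crown with an even number `m` of edges,
of the form `v₀ > v₁ < ⋯ < v_m ≠ v₀`. -/
def IsWFence (S : Finset (V × V)) : Prop :=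
  ¬ IsCrown S ∧ ∃ m f, 1 ≤ m ∧ m % 2 = 0 ∧ f m ≠ f 0 ∧ IsZigzagShape S m f true

/-- An N-fence: a non-crown with an odd number `m` of edges,
of the form `v₀ > v₁ < ⋯ > v_m`. -/
def IsNFence (S : Finset (V × V)) : Prop :=
  ¬ IsCrown S ∧ ∃ m f, m % 2 = 1 ∧ IsZigzagShape S m f true

/-- A support network of `N = (V, E)`: a spanning subgraph that is itself a
`p`-rooted almost-binary phylogenetic network on `X` (identified with its edge set). -/
def IsSupportNet (E S : Finset (V × V)) (p : ℕ) (X : Finset V) : Prop :=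
  S ⊆ E ∧ verts S = verts E ∧ IsPhyloNet S p X

/-- A minimal support network: no support network is a proper subgraph of it. -/
def IsMinimalSupportNet (E S : Finset (V × V)) (p : ℕ) (X : Finset V) : Prop :=
  IsSupportNet E S p X ∧ ∀ S', IsSupportNet E S' p X → ¬ S' ⊂ S

/-- A minimum support network: one with the fewest edges among all support networks. -/
def IsMinimumSupportNet (E S : Finset (V × V)) (p : ℕ) (X : Finset V) : Prop :=
  IsSupportNet E S p X ∧ ∀ S', IsSupportNet E S' p X → S.card ≤ S'.card

/-- `S ⊆ Z` is A-admissible (degrees taken in the ambient network `E`):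
(C1) `S` contains every edge `(u,v)` of `Z` with `outdeg u = 1` or `indeg v = 1`;
(C2) of any two distinct edges of `Z` sharing a tail or a head, `S` contains at least one. -/
def AAdmissible (E Z S : Finset (V × V)) : Prop :=
  S ⊆ Z ∧
  (∀ e ∈ Z, (outdeg E e.1 = 1 ∨ indeg E e.2 = 1) → e ∈ S) ∧
  (∀ e₁ ∈ Z, ∀ e₂ ∈ Z, e₁ ≠ e₂ → Shares e₁ e₂ → e₁ ∈ S ∨ e₂ ∈ S)

/-- A B-admissible subset: an A-admissible subset none of whose proper subsets
is A-admissible. -/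
def BAdmissible (E Z S : Finset (V × V)) : Prop :=
  AAdmissible E Z S ∧ ∀ S', S' ⊂ S → ¬ AAdmissible E Z S'

/-- A C-admissible subset: an A-admissible subset of minimum cardinality. -/
def CAdmissible (E Z S : Finset (V × V)) : Prop :=
  AAdmissible E Z S ∧ ∀ S', AAdmissible E Z S' → S.card ≤ S'.card

/-- One subdivision step: an edge `(u, v)` is replaced by `(u, w), (w, v)` for a fresh
vertex `w`. -/
def SubdivStep (T T' : Finset (V × V)) : Prop :=
  ∃ u w v, (u, v) ∈ T ∧ w ∉ verts T ∧
    T' = insert (u, w) (insert (w, v) (T.erase (u, v)))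

/-- `S` is a subdivision of `T` (zero or more subdivision steps). -/
def IsSubdivisionOf (S T : Finset (V × V)) : Prop :=
  Relation.ReflTransGen SubdivStep T S

/-- A rooted binary phylogenetic tree on `X`: a 1-rooted network on `X` in which every
non-root, non-leaf vertex has in-degree 1 and out-degree 2. -/
def IsBinaryPhyloTree (T : Finset (V × V)) (X : Finset V) : Prop :=
  IsPhyloNet T 1 X ∧
  ∀ v ∈ verts T, indeg T v ≠ 0 → v ∉ X → indeg T v = 1 ∧ outdeg T v = 2

/-- `N = (V, E)` is tree-based: it has a support tree, i.e. a spanning subgraph that is a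
subdivision of some rooted binary phylogenetic tree on `X`. -/
def IsTreeBased (E : Finset (V × V)) (X : Finset V) : Prop :=
  ∃ S T, S ⊆ E ∧ verts S = verts E ∧ IsBinaryPhyloTree T X ∧ IsSubdivisionOf S T

/-- The underlying undirected simple graph of the digraph with edge set `S`. -/
def usym (S : Finset (V × V)) : SimpleGraph V where
  Adj u v := u ≠ v ∧ ((u, v) ∈ S ∨ (v, u) ∈ S)
  symm := ⟨fun _ _ h => ⟨h.1.symm, h.2.symm⟩⟩
  loopless := ⟨fun _ h => h.1 rfl⟩

/-- Two edges of `S` lie in a common block of the underlying undirected graph: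
they are equal or lie on a common cycle. -/
def SameBlock (S : Finset (V × V)) (e f : V × V) : Prop :=
  e = f ∨ ∃ (a : V) (w : (usym S).Walk a a), w.IsCycle ∧
    s(e.1, e.2) ∈ w.edges ∧ s(f.1, f.2) ∈ w.edges

/-- The number of reticulations (in-degree-2 vertices) contained in the block of the
edge `e` of `S`. -/
noncomputable def blockReticCount (S : Finset (V × V)) (e : V × V) : ℕ :=
  Set.ncard {v : V | indeg S v = 2 ∧ ∃ f ∈ S, SameBlock S e f ∧ (f.1 = v ∨ f.2 = v)}

/-- The level of the network with edge set `S`: the maximum number of reticulations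
contained in a block. -/
noncomputable def level (S : Finset (V × V)) : ℕ :=
  S.sup (blockReticCount S)

/-! ### Auxiliary lemmas -/

section Aux

variable {E S : Finset (V × V)} {p : ℕ} {X : Finset V}

lemma shares_symm {e f : V × V} (h : Shares e f) : Shares f e :=
  h.imp Eq.symm Eq.symm

lemma mem_verts_iff {v : V} :
    v ∈ verts E ↔ (∃ e ∈ E, e.1 = v) ∨ ∃ e ∈ E, e.2 = v := by
  simp [verts, Finset.mem_union, Finset.mem_image]

lemma indeg_pos_iff {v : V} : 0 < indeg E v ↔ ∃ e ∈ E, e.2 = v := by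
  simp [indeg, Finset.card_pos, Finset.filter_nonempty_iff]

lemma outdeg_pos_iff {v : V} : 0 < outdeg E v ↔ ∃ e ∈ E, e.1 = v := by
  simp [outdeg, Finset.card_pos, Finset.filter_nonempty_iff]

lemma indeg_mono (h : S ⊆ E) (v : V) : indeg S v ≤ indeg E v :=
  Finset.card_le_card (Finset.filter_subset_filter _ h)

lemma outdeg_mono (h : S ⊆ E) (v : V) : outdeg S v ≤ outdeg E v :=
  Finset.card_le_card (Finset.filter_subset_filter _ h)

lemma leaf_deg (hN : IsPhyloNet E p X) {v : V} (hv : v ∈ X) :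
    v ∈ verts E ∧ indeg E v = 1 ∧ outdeg E v = 0 := by
  rw [← hN.leaves_eq] at hv
  have := Finset.mem_filter.mp hv
  exact ⟨this.1, this.2.1, this.2.2⟩

lemma deg_le_two (hN : IsPhyloNet E p X) (v : V) :
    indeg E v ≤ 2 ∧ outdeg E v ≤ 2 := by
  by_cases h0 : indeg E v = 0
  · refine ⟨by omega, ?_⟩
    by_cases hv : v ∈ verts E
    · rcases hN.root_outdeg v hv h0 with h | h <;> omega
    · by_contra h
      have hpos : 0 < outdeg E v := by omega
      obtain ⟨e, he, he1⟩ := outdeg_pos_iff.mp hpos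
      exact hv (mem_verts_iff.mpr (Or.inl ⟨e, he, he1⟩))
  · have hpos : 0 < indeg E v := Nat.pos_of_ne_zero h0
    obtain ⟨e, he, he2⟩ := indeg_pos_iff.mp hpos
    have hv : v ∈ verts E := mem_verts_iff.mpr (Or.inr ⟨e, he, he2⟩)
    by_cases hx : v ∈ X
    · obtain ⟨-, h1, h2⟩ := leaf_deg hN hx
      omega
    · obtain ⟨h1, h2⟩ := hN.internal_deg v hv h0 hx
      rcases h1 with h1 | h1 <;> rcases h2 with h2 | h2 <;> omega

/-- The "global" admissibility conditions. -/
def GAdm (E S : Finset (V × V)) : Prop :=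
  (∀ e ∈ E, (outdeg E e.1 = 1 ∨ indeg E e.2 = 1) → e ∈ S) ∧
  (∀ e₁ ∈ E, ∀ e₂ ∈ E, e₁ ≠ e₂ → Shares e₁ e₂ → e₁ ∈ S ∨ e₂ ∈ S)

lemma GAdm.indeg_pos (hG : GAdm E S) {v : V} (h : 0 < indeg E v) :
    0 < indeg S v := by
  obtain ⟨e, he, hev⟩ := indeg_pos_iff.mp h
  by_cases h1 : indeg E v = 1
  · exact indeg_pos_iff.mpr ⟨e, hG.1 e he (Or.inr (by rw [hev]; exact h1)), hev⟩
  · have h2 : 1 < indeg E v := by omega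
    obtain ⟨e₁, he₁, e₂, he₂, hne⟩ := Finset.one_lt_card.mp h2
    rw [Finset.mem_filter] at he₁ he₂
    have hsh : Shares e₁ e₂ := Or.inr (he₁.2.trans he₂.2.symm)
    rcases hG.2 e₁ he₁.1 e₂ he₂.1 hne hsh with h' | h'
    · exact indeg_pos_iff.mpr ⟨e₁, h', he₁.2⟩
    · exact indeg_pos_iff.mpr ⟨e₂, h', he₂.2⟩

lemma GAdm.outdeg_pos (hG : GAdm E S) {v : V} (h : 0 < outdeg E v) :
    0 < outdeg S v := by
  obtain ⟨e, he, hev⟩ := outdeg_pos_iff.mp h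
  by_cases h1 : outdeg E v = 1
  · exact outdeg_pos_iff.mpr ⟨e, hG.1 e he (Or.inl (by rw [hev]; exact h1)), hev⟩
  · have h2 : 1 < outdeg E v := by omega
    obtain ⟨e₁, he₁, e₂, he₂, hne⟩ := Finset.one_lt_card.mp h2
    rw [Finset.mem_filter] at he₁ he₂
    have hsh : Shares e₁ e₂ := Or.inl (he₁.2.trans he₂.2.symm)
    rcases hG.2 e₁ he₁.1 e₂ he₂.1 hne hsh with h' | h'
    · exact outdeg_pos_iff.mpr ⟨e₁, h', he₁.2⟩
    · exact outdeg_pos_iff.mpr ⟨e₂, h', he₂.2⟩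

lemma verts_eq_of_GAdm (hS : S ⊆ E) (hG : GAdm E S) : verts S = verts E := by
  apply Finset.Subset.antisymm
  · exact Finset.union_subset_union (Finset.image_subset_image hS)
      (Finset.image_subset_image hS)
  · intro v hv
    rcases mem_verts_iff.mp hv with ⟨e, he, hev⟩ | ⟨e, he, hev⟩
    · have : 0 < outdeg S v := hG.outdeg_pos (outdeg_pos_iff.mpr ⟨e, he, hev⟩)
      obtain ⟨f, hf, hfv⟩ := outdeg_pos_iff.mp this
      exact mem_verts_iff.mpr (Or.inl ⟨f, hf, hfv⟩)
    · have : 0 < indeg S v := hG.indeg_pos (indeg_pos_iff.mpr ⟨e, he, hev⟩)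
      obtain ⟨f, hf, hfv⟩ := indeg_pos_iff.mp this
      exact mem_verts_iff.mpr (Or.inr ⟨f, hf, hfv⟩)

lemma support_of_GAdm (hN : IsPhyloNet E p X) (hS : S ⊆ E) (hG : GAdm E S) :
    IsSupportNet E S p X := by
  have hverts : verts S = verts E := verts_eq_of_GAdm hS hG
  have hio : ∀ v, indeg S v = 0 ↔ indeg E v = 0 := by
    intro v
    have h1 := indeg_mono hS v
    constructor
    · intro h
      by_contra h'
      have := hG.indeg_pos (v := v) (by omega)
      omega
    · intro h; omega
  refine ⟨hS, hverts, ?_, ?_, ?_, ?_, ?_⟩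
  · intro v h
    exact hN.acyclic v (Relation.TransGen.mono (fun a b hab => hS hab) v v h)
  · rw [hverts, Finset.filter_congr fun v _ => by rw [hio v]]
    exact hN.roots_card
  · intro v hv h0
    have hvE : v ∈ verts E := hverts ▸ hv
    have h0E : indeg E v = 0 := (hio v).mp h0
    have hout := hN.root_outdeg v hvE h0E
    have h1 : outdeg S v ≤ outdeg E v := outdeg_mono hS v
    have h2 : 0 < outdeg S v := hG.outdeg_pos (by omega)
    omega
  · rw [← hN.leaves_eq]
    apply Finset.ext
    intro v
    rw [Finset.mem_filter, Finset.mem_filter, hverts]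
    constructor
    · rintro ⟨hv, hin, hout⟩
      refine ⟨hv, ?_, ?_⟩
      · have hiE : indeg E v ≠ 0 := fun h => by
          have := (hio v).mpr h; omega
        have hoE : outdeg E v = 0 := by
          by_contra h
          have := hG.outdeg_pos (v := v) (by omega)
          omega
        by_cases hx : v ∈ X
        · exact (leaf_deg hN hx).2.1
        · obtain ⟨-, h2⟩ := hN.internal_deg v hv hiE hx
          omega
      · by_contra h
        have := hG.outdeg_pos (v := v) (by omega)
        omega
    · rintro ⟨hv, hin, hout⟩
      have h1 : 0 < indeg S v := hG.indeg_pos (by omega)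
      have h2 : indeg S v ≤ indeg E v := indeg_mono hS v
      have h3 : outdeg S v ≤ outdeg E v := outdeg_mono hS v
      have h4 : 0 < indeg S v := h1
      refine ⟨?_, by omega, by omega⟩
      obtain ⟨f, hf, hfv⟩ := indeg_pos_iff.mp h1
      rw [← hverts] at *
      exact mem_verts_iff.mpr (Or.inr ⟨f, hf, hfv⟩)
  · intro v hv h0 hx
    have hvE : v ∈ verts E := hverts ▸ hv
    have h1 : indeg S v ≤ indeg E v := indeg_mono hS v
    have h2 : outdeg S v ≤ outdeg E v := outdeg_mono hS v
    have hiE : indeg E v ≠ 0 := fun h => h0 (by omega)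
    obtain ⟨hi, ho⟩ := hN.internal_deg v hvE hiE hx
    have h3 : 0 < outdeg S v := hG.outdeg_pos (by omega)
    have h4 : 0 < indeg S v := Nat.pos_of_ne_zero h0
    omega

lemma GAdm_of_support (hN : IsPhyloNet E p X) (hsup : IsSupportNet E S p X) :
    GAdm E S := by
  obtain ⟨hS, hverts, hNS⟩ := hsup
  have hno_root : ∀ v ∈ verts E, indeg S v = 0 → indeg E v = 0 := by
    intro v hv h0
    by_contra hne
    have hsubset : (verts E).filter (fun w => indeg E w = 0) ⊆
        (verts E).filter (fun w => indeg S w = 0) := by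
      intro w hw
      rw [Finset.mem_filter] at hw ⊢
      have := indeg_mono hS w
      exact ⟨hw.1, by omega⟩
    have hss : (verts E).filter (fun w => indeg E w = 0) ⊂
        (verts E).filter (fun w => indeg S w = 0) :=
      (Finset.ssubset_iff_of_subset hsubset).mpr
        ⟨v, Finset.mem_filter.mpr ⟨hv, h0⟩,
          fun h => hne (Finset.mem_filter.mp h).2⟩
    have hlt := Finset.card_lt_card hss
    have h1 := hN.roots_card
    have h2 := hNS.roots_card
    rw [hverts] at h2
    omega
  have hno_dead : ∀ v ∈ verts E, outdeg S v = 0 → outdeg E v = 0 := by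
    intro v hv h0
    have hvS : v ∈ verts S := hverts ▸ hv
    by_cases hi : indeg S v = 0
    · rcases hNS.root_outdeg v hvS hi with h | h <;> omega
    · by_cases hx : v ∈ X
      · exact (leaf_deg hN hx).2.2
      · obtain ⟨-, h2⟩ := hNS.internal_deg v hvS hi hx
        rcases h2 with h | h <;> omega
  constructor
  · intro e he hcond
    by_contra heS
    rcases hcond with h1 | h1
    · have hfe : ({e} : Finset (V × V)) = E.filter (fun p => p.1 = e.1) :=
        Finset.eq_of_subset_of_card_le
          (Finset.singleton_subset_iff.mpr (Finset.mem_filter.mpr ⟨he, rfl⟩))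
          (by rw [Finset.card_singleton]; exact le_of_eq h1)
      have hout0 : outdeg S e.1 = 0 := by
        rw [outdeg, Finset.card_eq_zero]
        apply Finset.eq_empty_iff_forall_notMem.mpr
        intro x hx
        have hxE : x ∈ E.filter (fun p => p.1 = e.1) :=
          Finset.filter_subset_filter _ hS hx
        rw [← hfe, Finset.mem_singleton] at hxE
        subst hxE
        exact heS (Finset.mem_filter.mp hx).1
      have := hno_dead e.1 (mem_verts_iff.mpr (Or.inl ⟨e, he, rfl⟩)) hout0
      omega
    · have hfe : ({e} : Finset (V × V)) = E.filter (fun p => p.2 = e.2) :=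
        Finset.eq_of_subset_of_card_le
          (Finset.singleton_subset_iff.mpr (Finset.mem_filter.mpr ⟨he, rfl⟩))
          (by rw [Finset.card_singleton]; exact le_of_eq h1)
      have hin0 : indeg S e.2 = 0 := by
        rw [indeg, Finset.card_eq_zero]
        apply Finset.eq_empty_iff_forall_notMem.mpr
        intro x hx
        have hxE : x ∈ E.filter (fun p => p.2 = e.2) :=
          Finset.filter_subset_filter _ hS hx
        rw [← hfe, Finset.mem_singleton] at hxE
        subst hxE
        exact heS (Finset.mem_filter.mp hx).1
      have := hno_root e.2 (mem_verts_iff.mpr (Or.inr ⟨e, he, rfl⟩)) hin0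
      omega
  · intro e₁ h1 e₂ h2 hne hsh
    by_contra hcon
    push_neg at hcon
    obtain ⟨hn1, hn2⟩ := hcon
    rcases hsh with hsh | hsh
    · have hsub : ({e₁, e₂} : Finset (V × V)) ⊆ E.filter (fun p => p.1 = e₁.1) := by
        intro x hx
        simp only [Finset.mem_insert, Finset.mem_singleton] at hx
        rcases hx with rfl | rfl
        · exact Finset.mem_filter.mpr ⟨h1, rfl⟩
        · exact Finset.mem_filter.mpr ⟨h2, hsh.symm⟩
      have hfe : ({e₁, e₂} : Finset (V × V)) = E.filter (fun p => p.1 = e₁.1) :=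
        Finset.eq_of_subset_of_card_le hsub
          (by rw [Finset.card_pair hne]; exact (deg_le_two hN e₁.1).2)
      have hout0 : outdeg S e₁.1 = 0 := by
        rw [outdeg, Finset.card_eq_zero]
        apply Finset.eq_empty_iff_forall_notMem.mpr
        intro x hx
        have hxE : x ∈ E.filter (fun p => p.1 = e₁.1) :=
          Finset.filter_subset_filter _ hS hx
        rw [← hfe] at hxE
        simp only [Finset.mem_insert, Finset.mem_singleton] at hxE
        have hxS := (Finset.mem_filter.mp hx).1
        rcases hxE with rfl | rfl
        · exact hn1 hxS
        · exact hn2 hxS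
      have hd := hno_dead e₁.1 (mem_verts_iff.mpr (Or.inl ⟨e₁, h1, rfl⟩)) hout0
      have : 0 < outdeg E e₁.1 := outdeg_pos_iff.mpr ⟨e₁, h1, rfl⟩
      omega
    · have hsub : ({e₁, e₂} : Finset (V × V)) ⊆ E.filter (fun p => p.2 = e₁.2) := by
        intro x hx
        simp only [Finset.mem_insert, Finset.mem_singleton] at hx
        rcases hx with rfl | rfl
        · exact Finset.mem_filter.mpr ⟨h1, rfl⟩
        · exact Finset.mem_filter.mpr ⟨h2, hsh.symm⟩
      have hfe : ({e₁, e₂} : Finset (V × V)) = E.filter (fun p => p.2 = e₁.2) :=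
        Finset.eq_of_subset_of_card_le hsub
          (by rw [Finset.card_pair hne]; exact (deg_le_two hN e₁.2).1)
      have hin0 : indeg S e₁.2 = 0 := by
        rw [indeg, Finset.card_eq_zero]
        apply Finset.eq_empty_iff_forall_notMem.mpr
        intro x hx
        have hxE : x ∈ E.filter (fun p => p.2 = e₁.2) :=
          Finset.filter_subset_filter _ hS hx
        rw [← hfe] at hxE
        simp only [Finset.mem_insert, Finset.mem_singleton] at hxE
        have hxS := (Finset.mem_filter.mp hx).1
        rcases hxE with rfl | rfl
        · exact hn1 hxS
        · exact hn2 hxS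
      have hd := hno_root e₁.2 (mem_verts_iff.mpr (Or.inr ⟨e₁, h1, rfl⟩)) hin0
      have : 0 < indeg E e₁.2 := indeg_pos_iff.mpr ⟨e₁, h1, rfl⟩
      omega

lemma not_three_shares (hN : IsPhyloNet E p X) {e x y z : V × V}
    (he : e ∈ E) (hx : x ∈ E) (hy : y ∈ E) (hz : z ∈ E)
    (hxe : x ≠ e) (hye : y ≠ e) (hze : z ≠ e)
    (hxy : x ≠ y) (hxz : x ≠ z) (hyz : y ≠ z)
    (sx : Shares e x) (sy : Shares e y) (sz : Shares e z) : False := by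
  have h2o : outdeg E e.1 ≤ 2 := (deg_le_two hN e.1).2
  have h2i : indeg E e.2 ≤ 2 := (deg_le_two hN e.2).1
  have ctail : ∀ {a b : V × V}, a ∈ E → b ∈ E → a ≠ e → b ≠ e → a ≠ b →
      e.1 = a.1 → e.1 = b.1 → False := by
    intro a b ha hb hae hbe hab ha1 hb1
    have h3 : 2 < outdeg E e.1 :=
      Finset.two_lt_card.mpr
        ⟨e, Finset.mem_filter.mpr ⟨he, rfl⟩,
         a, Finset.mem_filter.mpr ⟨ha, ha1.symm⟩,
         b, Finset.mem_filter.mpr ⟨hb, hb1.symm⟩,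
         fun h => hae h.symm, fun h => hbe h.symm, hab⟩
    omega
  have chead : ∀ {a b : V × V}, a ∈ E → b ∈ E → a ≠ e → b ≠ e → a ≠ b →
      e.2 = a.2 → e.2 = b.2 → False := by
    intro a b ha hb hae hbe hab ha2 hb2
    have h3 : 2 < indeg E e.2 :=
      Finset.two_lt_card.mpr
        ⟨e, Finset.mem_filter.mpr ⟨he, rfl⟩,
         a, Finset.mem_filter.mpr ⟨ha, ha2.symm⟩,
         b, Finset.mem_filter.mpr ⟨hb, hb2.symm⟩,
         fun h => hae h.symm, fun h => hbe h.symm, hab⟩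
    omega
  rcases sx with h1 | h1 <;> rcases sy with h2 | h2 <;> rcases sz with h3 | h3
  · exact ctail hx hy hxe hye hxy h1 h2
  · exact ctail hx hy hxe hye hxy h1 h2
  · exact ctail hx hz hxe hze hxz h1 h3
  · exact chead hy hz hye hze hyz h2 h3
  · exact ctail hy hz hye hze hyz h2 h3
  · exact chead hx hz hxe hze hxz h1 h3
  · exact chead hx hy hxe hye hxy h1 h2
  · exact chead hx hy hxe hye hxy h1 h2

lemma same_trail (hN : IsPhyloNet E p X) {Z₀ : Finset (V × V)}
    (hmx : IsMaximalZigzagTrail E Z₀) {e f : V × V}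
    (he : e ∈ Z₀) (hf : f ∈ E) (hef : e ≠ f) (hsh : Shares e f) : f ∈ Z₀ := by
  by_contra hfZ
  obtain ⟨⟨hZE, l, hlne, hlnd, hlfin, hlch⟩, hmax⟩ := hmx
  have hel : e ∈ l := by rw [← List.mem_toFinset, hlfin]; exact he
  have hfl : f ∉ l := fun h => hfZ (hlfin ▸ List.mem_toFinset.mpr h)
  have hcontra : ∀ l' : List (V × V), l' ≠ [] → l'.Nodup →
      l'.toFinset = insert f Z₀ → l'.Chain' Shares → False := by
    intro l' h1 h2 h3 h4
    exact hmax (insert f Z₀) ⟨Finset.insert_subset hf hZE, l', h1, h2, h3, h4⟩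
      (Finset.ssubset_insert hfZ)
  obtain ⟨l₁, l₂, rfl⟩ := List.append_of_mem hel
  rcases List.eq_nil_or_concat l₁ with rfl | ⟨l₁', g₁, rfl⟩
  · simp only [List.nil_append] at hlnd hlfin hlch hfl
    apply hcontra (f :: e :: l₂) (by simp)
    · exact List.nodup_cons.mpr ⟨hfl, hlnd⟩
    · rw [List.toFinset_cons, hlfin]
    · exact List.isChain_cons_cons.mpr ⟨shares_symm hsh, hlch⟩
  · rw [List.concat_eq_append] at hlnd hlfin hlch hfl
    rcases l₂ with _ | ⟨g₂, l₂'⟩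
    · apply hcontra (((l₁' ++ [g₁]) ++ [e]) ++ [f]) (by simp)
      · rw [List.nodup_append]
        refine ⟨hlnd, List.nodup_singleton f, fun a ha b hb => ?_⟩
        rw [List.mem_singleton] at hb
        subst hb
        exact fun h => hfl (h ▸ ha)
      · rw [List.toFinset_append, hlfin]
        ext a
        simp [or_comm]
      · apply List.isChain_append.mpr
        refine ⟨hlch, List.isChain_singleton f, fun x hx y hy => ?_⟩
        rw [List.getLast?_concat] at hx
        simp only [List.head?_cons, Option.mem_some_iff] at hx hy
        subst hx; subst hy
        exact hsh
    · obtain ⟨hc1, hc2, hc3⟩ := List.isChain_append.mp hlch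
      have hg1e : Shares g₁ e := hc3 g₁ List.getLast?_concat e rfl
      have heg2 : Shares e g₂ := (List.isChain_cons_cons.mp hc2).1
      have hg1l : g₁ ∈ (l₁' ++ [g₁]) ++ e :: g₂ :: l₂' := by simp
      have hg2l : g₂ ∈ (l₁' ++ [g₁]) ++ e :: g₂ :: l₂' := by simp
      have hg1Z : g₁ ∈ Z₀ := hlfin ▸ List.mem_toFinset.mpr hg1l
      have hg2Z : g₂ ∈ Z₀ := hlfin ▸ List.mem_toFinset.mpr hg2l
      rw [List.nodup_append] at hlnd
      obtain ⟨hnd1, hnd2, hdisj12⟩ := hlnd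
      have hg1mem : g₁ ∈ l₁' ++ [g₁] := by simp
      have hg1e' : g₁ ≠ e := by
        intro h
        refine hdisj12 g₁ hg1mem g₁ ?_ rfl
        rw [h]; simp
      have hg1g2 : g₁ ≠ g₂ := by
        intro h
        refine hdisj12 g₁ hg1mem g₁ ?_ rfl
        rw [h]; simp
      have heg2' : e ≠ g₂ := by
        rw [List.nodup_cons] at hnd2
        intro h
        refine hnd2.1 ?_
        rw [h]; simp
      exact not_three_shares hN (hZE he) hf (hZE hg1Z) (hZE hg2Z)
        (Ne.symm hef) hg1e' (Ne.symm heg2')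
        (fun h => hfZ (h ▸ hg1Z)) (fun h => hfZ (h ▸ hg2Z)) hg1g2
        hsh (shares_symm hg1e) heg2

end Aux

/-- `N[S]` is a support network of `N` iff `S ∩ E(Zᵢ)` is A-admissible in `E(Zᵢ)` for every
maximal zig-zag trail `Zᵢ` of the decomposition of `N`. -/
theorem stmt6 (p : ℕ) (hp : 1 ≤ p) (X : Finset V) (hX : X.Nonempty)
    (E : Finset (V × V)) (hN : IsPhyloNet E p X)
    (d : ℕ) (Z : Fin d → Finset (V × V))
    (hmax : ∀ i, IsMaximalZigzagTrail E (Z i))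
    (hdisj : ∀ i j, i ≠ j → Disjoint (Z i) (Z j))
    (hcover : Finset.univ.biUnion Z = E)
    (S : Finset (V × V)) (hS : S ⊆ E) :
    IsSupportNet E S p X ↔ ∀ i, AAdmissible E (Z i) (S ∩ Z i) := by
  constructor
  · intro hsup i
    obtain ⟨hG1, hG2⟩ := GAdm_of_support hN hsup
    have hZE : Z i ⊆ E := (hmax i).1.1
    refine ⟨Finset.inter_subset_right, fun e heZ hcond => ?_,
      fun e₁ h1 e₂ h2 hne hsh => ?_⟩
    · exact Finset.mem_inter.mpr ⟨hG1 e (hZE heZ) hcond, heZ⟩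
    · rcases hG2 e₁ (hZE h1) e₂ (hZE h2) hne hsh with h | h
      · exact Or.inl (Finset.mem_inter.mpr ⟨h, h1⟩)
      · exact Or.inr (Finset.mem_inter.mpr ⟨h, h2⟩)
  · intro hA
    apply support_of_GAdm hN hS
    constructor
    · intro e he hcond
      have he' : e ∈ Finset.univ.biUnion Z := hcover ▸ he
      obtain ⟨i, -, hi⟩ := Finset.mem_biUnion.mp he'
      exact (Finset.mem_inter.mp ((hA i).2.1 e hi hcond)).1
    · intro e₁ h1 e₂ h2 hne hsh
      have h1' : e₁ ∈ Finset.univ.biUnion Z := hcover ▸ h1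
      obtain ⟨i, -, hi⟩ := Finset.mem_biUnion.mp h1'
      have h2i : e₂ ∈ Z i := same_trail hN (hmax i) hi h2 hne hsh
      rcases (hA i).2.2 e₁ hi e₂ h2i hne hsh with h | h
      · exact Or.inl (Finset.mem_inter.mp h).1
      · exact Or.inr (Finset.mem_inter.mp h).1
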